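/- Let (G,L,v) be a reachable triple and let i ∈ {1,2,3,4} be a color such that i ∈ L(u) for some neighbor u of v in G. If deg_G(v) = 2 then Pr_{G,L}[c(v)=i] ≤ 12/25, and if deg_G(v) = 1 then Pr_{G,L}[c(v)=i] ≤ 6/13. -/

import Mathlib

open Finset

variable {V : Type} [Fintype V] [DecidableEq V]

/-- The set of proper colorings of the list-coloring instance `(G, L)` with colors `Fin 4`. -/
def properColorings (G : SimpleGraph V) [DecidableRel G.Adj]
    (L : V → Finset (Fin 4)) : Finset (V → Fin 4) :=
  Finset.univ.filter
    (fun c => (∀ u, c u ∈ L u) ∧ ∀ u w : V, G.Adj u w → c u ≠ c w)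

/-- The marginal probability `Pr_{G,L}[c(v) = i]` under the uniform distribution on
proper colorings of `(G, L)`. -/
noncomputable def margin (G : SimpleGraph V) [DecidableRel G.Adj]
    (L : V → Finset (Fin 4)) (v : V) (i : Fin 4) : ℝ :=
  (((properColorings G L).filter (fun c => c v = i)).card : ℝ) /
    ((properColorings G L).card : ℝ)

/-- The triple `(G, L, v)` is reachable: every vertex has degree at most `3` and list size
at least its degree plus one, `v` has degree at most `2` and list size at least its degree
plus two. -/
def Reachable4 (G : SimpleGraph V) [DecidableRel G.Adj]
    (L : V → Finset (Fin 4)) (v : V) : Prop :=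
  (∀ u : V, G.degree u ≤ 3 ∧ G.degree u + 1 ≤ (L u).card) ∧
    G.degree v ≤ 2 ∧ G.degree v + 2 ≤ (L v).card

set_option linter.unusedSectionVars false

lemma mem_pc {G : SimpleGraph V} [DecidableRel G.Adj] {L : V → Finset (Fin 4)}
    {c : V → Fin 4} :
    c ∈ properColorings G L ↔ (∀ u, c u ∈ L u) ∧ ∀ u w : V, G.Adj u w → c u ≠ c w := by
  simp [properColorings]

lemma update_mem_pc {G : SimpleGraph V} [DecidableRel G.Adj] {L : V → Finset (Fin 4)}
    {v : V} {c : V → Fin 4} {j : Fin 4}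
    (hlist : ∀ u, u ≠ v → c u ∈ L u)
    (hprop : ∀ a b, G.Adj a b → a ≠ v → b ≠ v → c a ≠ c b)
    (hj : j ∈ L v)
    (hnimg : ∀ b, G.Adj v b → j ≠ c b) :
    Function.update c v j ∈ properColorings G L := by
  rw [mem_pc]
  constructor
  · intro u
    rw [Function.update_apply]
    split_ifs with hu
    · rw [hu]; exact hj
    · exact hlist u hu
  · intro a b hab
    rw [Function.update_apply, Function.update_apply]
    split_ifs with ha hb hb
    · exact absurd (ha.trans hb.symm) (G.ne_of_adj hab)
    · exact hnimg b (by rwa [ha] at hab)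
    · exact fun h => hnimg a (by rw [hb] at hab; exact hab.symm) h.symm
    · exact hprop a b hab ha hb

lemma avail_nonempty (G : SimpleGraph V) [DecidableRel G.Adj] (L : V → Finset (Fin 4))
    (v : V) (i : Fin 4) (h : G.degree v + 2 ≤ (L v).card) (c : V → Fin 4) :
    (L v \ insert i ((G.neighborFinset v).image c)).Nonempty := by
  rw [← Finset.card_pos]
  have h1 : (insert i ((G.neighborFinset v).image c)).card ≤ 1 + G.degree v := by
    refine le_trans (Finset.card_insert_le _ _) ?_
    have := Finset.card_image_le (s := G.neighborFinset v) (f := c)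
    rw [SimpleGraph.degree]; omega
  have h2 := Finset.le_card_sdiff (insert i ((G.neighborFinset v).image c)) (L v)
  omega

lemma lemA (G : SimpleGraph V) [DecidableRel G.Adj] (L : V → Finset (Fin 4)) (v : V)
    (i : Fin 4) (h : G.degree v + 2 ≤ (L v).card) :
    2 * ((properColorings G L).filter (fun c => c v = i)).card
      ≤ (properColorings G L).card := by
  classical
  have hsplit := Finset.card_filter_add_card_filter_not
    (s := properColorings G L) (p := fun c => c v = i)
  have key : ((properColorings G L).filter (fun c => c v = i)).card
      ≤ ((properColorings G L).filter (fun c => ¬ c v = i)).card := by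
    apply Finset.card_le_card_of_injOn
      (fun c => Function.update c v ((avail_nonempty G L v i h c).choose))
    · intro c hc
      rw [Finset.mem_coe, Finset.mem_filter] at hc ⊢
      obtain ⟨hcP, hcv⟩ := hc
      rw [mem_pc] at hcP
      have hmem := (avail_nonempty G L v i h c).choose_spec
      rw [Finset.mem_sdiff, Finset.mem_insert] at hmem
      push_neg at hmem
      obtain ⟨hL, hni, hnimg⟩ := hmem
      refine ⟨?_, by simpa using hni⟩
      apply update_mem_pc (fun u _ => hcP.1 u) (fun a b hab _ _ => hcP.2 a b hab) hL
      intro b hb hcontra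
      exact hnimg (Finset.mem_image.2 ⟨b, by simp [SimpleGraph.mem_neighborFinset, hb], hcontra.symm⟩)
    · intro c1 h1 c2 h2 heq
      rw [Finset.mem_coe, Finset.mem_filter] at h1 h2
      funext x
      by_cases hx : x = v
      · rw [hx, h1.2, h2.2]
      · have := congrFun heq x
        simpa [Function.update_apply, if_neg hx] using this
  linarith

def Gd (G : SimpleGraph V) (v : V) : SimpleGraph V where
  Adj a b := G.Adj a b ∧ a ≠ v ∧ b ≠ v
  symm := by constructor; rintro a b ⟨h, ha, hb⟩; exact ⟨h.symm, hb, ha⟩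
  loopless := by constructor; rintro a ⟨h, _, _⟩; exact G.loopless.irrefl a h

instance instGdDec (G : SimpleGraph V) [DecidableRel G.Adj] (v : V) :
    DecidableRel (Gd G v).Adj :=
  fun a b => inferInstanceAs (Decidable (G.Adj a b ∧ a ≠ v ∧ b ≠ v))

lemma Gd_neighborFinset (G : SimpleGraph V) [DecidableRel G.Adj] {v u : V} :
    (Gd G v).neighborFinset u = ((G.neighborFinset u).erase v).filter (fun _ => u ≠ v) := by
  ext b
  simp only [SimpleGraph.mem_neighborFinset, Finset.mem_filter, Finset.mem_erase]
  constructor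
  · rintro ⟨h, hu, hb⟩; exact ⟨⟨hb, h⟩, hu⟩
  · rintro ⟨⟨hb, h⟩, hu⟩; exact ⟨h, hu, hb⟩

lemma Gd_degree_le (G : SimpleGraph V) [DecidableRel G.Adj] (v x : V) :
    (Gd G v).degree x ≤ G.degree x := by
  rw [SimpleGraph.degree, SimpleGraph.degree, Gd_neighborFinset]
  exact le_trans (Finset.card_le_card (Finset.filter_subset _ _))
    (Finset.card_le_card (Finset.erase_subset _ _))

lemma Gd_degree_adj (G : SimpleGraph V) [DecidableRel G.Adj] {v u : V} (h : G.Adj v u) :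
    (Gd G v).degree u + 1 = G.degree u := by
  rw [SimpleGraph.degree, SimpleGraph.degree, Gd_neighborFinset]
  rw [Finset.filter_true_of_mem (fun _ _ => (G.ne_of_adj h.symm))]
  rw [Finset.card_erase_of_mem (by simp [SimpleGraph.mem_neighborFinset, h.symm])]
  have : 1 ≤ (G.neighborFinset u).card := Finset.card_pos.2 ⟨v, by simp [SimpleGraph.mem_neighborFinset, h.symm]⟩
  omega

set_option linter.unusedSectionVars false

section Bij
variable (G : SimpleGraph V) [DecidableRel G.Adj] (L : V → Finset (Fin 4)) (v : V) (c0 : Fin 4)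

/-- Membership in the reduced instance. -/
lemma mem_R {c : V → Fin 4} :
    c ∈ properColorings (Gd G v) (Function.update L v {c0}) ↔
      (c v = c0 ∧ ∀ u, u ≠ v → c u ∈ L u) ∧
        ∀ a b, G.Adj a b → a ≠ v → b ≠ v → c a ≠ c b := by
  rw [mem_pc]
  constructor
  · rintro ⟨hl, hp⟩
    refine ⟨⟨by simpa using hl v, fun u hu => by simpa [Function.update_apply, if_neg hu] using hl u⟩, ?_⟩
    exact fun a b hab ha hb => hp a b ⟨hab, ha, hb⟩
  · rintro ⟨⟨hv, hl⟩, hp⟩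
    constructor
    · intro u
      by_cases hu : u = v
      · rw [hu]; simpa using hv
      · simpa [Function.update_apply, if_neg hu] using hl u hu
    · rintro a b ⟨hab, ha, hb⟩
      exact hp a b hab ha hb

/-- F2: decomposition of the number of colorings over the reduced instance. -/
lemma card_decomp :
    (properColorings G L).card
      = ∑ c' ∈ properColorings (Gd G v) (Function.update L v {c0}),
          (L v \ (G.neighborFinset v).image c').card := by
  classical
  rw [Finset.card_eq_sum_card_fiberwise
    (f := fun c => Function.update c v c0)
    (t := properColorings (Gd G v) (Function.update L v {c0})) ?maps]
  case maps =>
    intro c hc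
    rw [Finset.mem_coe, mem_pc] at hc
    rw [Finset.mem_coe, mem_R]
    refine ⟨⟨Function.update_self _ _ _, fun u hu => by
      simpa [Function.update_apply, if_neg hu] using hc.1 u⟩, ?_⟩
    intro a b hab ha hb
    simpa [Function.update_apply, if_neg ha, if_neg hb] using hc.2 a b hab
  apply Finset.sum_congr rfl
  intro c' hc'
  rw [mem_R] at hc'
  apply Finset.card_bij (fun c _ => c v)
  · intro c hc
    rw [Finset.mem_filter] at hc
    obtain ⟨hcP, hfib⟩ := hc
    rw [mem_pc] at hcP
    rw [Finset.mem_sdiff]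
    refine ⟨hcP.1 v, ?_⟩
    rw [Finset.mem_image]
    rintro ⟨x, hx, hcx⟩
    rw [SimpleGraph.mem_neighborFinset] at hx
    have hxv : x ≠ v := fun h => G.loopless.irrefl v (h ▸ hx)
    have : c' x = c x := by
      rw [← hfib, Function.update_apply, if_neg hxv]
    exact hcP.2 v x hx (by rw [← hcx, this])
  · intro c1 h1 c2 h2 heq
    rw [Finset.mem_filter] at h1 h2
    funext x
    by_cases hx : x = v
    · rw [hx]; exact heq
    · have := congrFun (h1.2.trans h2.2.symm) x
      simpa [Function.update_apply, if_neg hx] using this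
  · intro j hj
    rw [Finset.mem_sdiff] at hj
    refine ⟨Function.update c' v j, ?_, Function.update_self _ _ _⟩
    rw [Finset.mem_filter]
    constructor
    · apply update_mem_pc (fun u hu => hc'.1.2 u hu) hc'.2 hj.1
      intro b hb hcontra
      have hbv : b ≠ v := fun h => G.loopless.irrefl v (h ▸ hb)
      apply hj.2
      rw [Finset.mem_image]
      exact ⟨b, by rwa [SimpleGraph.mem_neighborFinset], hcontra.symm⟩
    · funext x
      by_cases hx : x = v
      · rw [hx]; rw [Function.update_self, hc'.1.1]
      · rw [Function.update_apply, if_neg hx, Function.update_apply, if_neg hx]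

/-- F1: colorings with `c v = i` correspond to reduced colorings avoiding `i` on neighbors. -/
lemma card_filter_eq (i : Fin 4) (hi : i ∈ L v) :
    ((properColorings G L).filter (fun c => c v = i)).card
      = ((properColorings (Gd G v) (Function.update L v {c0})).filter
          (fun c' => ∀ x ∈ G.neighborFinset v, c' x ≠ i)).card := by
  classical
  apply Finset.card_bij (fun c _ => Function.update c v c0)
  · intro c hc
    rw [Finset.mem_filter] at hc ⊢
    obtain ⟨hcP, hcv⟩ := hc
    rw [mem_pc] at hcP
    constructor
    · rw [mem_R]
      refine ⟨⟨Function.update_self _ _ _, fun u hu => by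
        simpa [Function.update_apply, if_neg hu] using hcP.1 u⟩, ?_⟩
      intro a b hab ha hb
      simpa [Function.update_apply, if_neg ha, if_neg hb] using hcP.2 a b hab
    · intro x hx
      rw [SimpleGraph.mem_neighborFinset] at hx
      have hxv : x ≠ v := fun h => G.loopless.irrefl v (h ▸ hx)
      rw [Function.update_apply, if_neg hxv]
      intro hcontra
      exact hcP.2 v x hx (by rw [hcv, hcontra])
  · intro c1 h1 c2 h2 heq
    rw [Finset.mem_filter] at h1 h2
    funext x
    by_cases hx : x = v
    · rw [hx, h1.2, h2.2]
    · have := congrFun heq x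
      simpa [Function.update_apply, if_neg hx] using this
  · intro c' hc'
    rw [Finset.mem_filter] at hc'
    obtain ⟨hcR, hnb⟩ := hc'
    rw [mem_R] at hcR
    refine ⟨Function.update c' v i, ?_, ?_⟩
    · rw [Finset.mem_filter]
      constructor
      · apply update_mem_pc (fun u hu => hcR.1.2 u hu) hcR.2 hi
        intro b hb hcontra
        exact hnb b (by rwa [SimpleGraph.mem_neighborFinset]) hcontra.symm
      · exact Function.update_self _ _ _
    · funext x
      by_cases hx : x = v
      · rw [hx, Function.update_self]; exact hcR.1.1.symm
      · rw [Function.update_apply, if_neg hx, Function.update_apply, if_neg hx]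

/-- F3: forcing the color of `u ≠ v` to `j ∈ L u` in the reduced instance. -/
lemma forced_eq (u : V) (huv : u ≠ v) (j : Fin 4) (hj : j ∈ L u) :
    properColorings (Gd G v) (Function.update (Function.update L v {c0}) u {j})
      = (properColorings (Gd G v) (Function.update L v {c0})).filter
          (fun c => c u = j) := by
  ext c
  rw [Finset.mem_filter, mem_pc, mem_R]
  constructor
  · rintro ⟨hl, hp⟩
    have hcu : c u = j := by simpa using hl u
    refine ⟨⟨⟨?_, ?_⟩, fun a b hab ha hb => hp a b ⟨hab, ha, hb⟩⟩, hcu⟩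
    · have := hl v
      rwa [Function.update_apply, if_neg (Ne.symm huv), Function.update_self,
        Finset.mem_singleton] at this
    · intro x hx
      by_cases hxu : x = u
      · rw [hxu, hcu]; exact hj
      · have := hl x
        rwa [Function.update_apply, if_neg hxu, Function.update_apply, if_neg hx] at this
  · rintro ⟨⟨⟨hv, hl⟩, hp⟩, hcu⟩
    refine ⟨?_, fun a b hab => by obtain ⟨h1, h2, h3⟩ := hab; exact hp a b h1 h2 h3⟩
    intro x
    rw [Function.update_apply]
    split_ifs with hxu
    · rw [hxu, hcu]; exact Finset.mem_singleton_self _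
    · rw [Function.update_apply]
      split_ifs with hxv
      · rw [hxv, hv]; exact Finset.mem_singleton_self _
      · exact hl x hxv

end Bij

lemma lemB (G : SimpleGraph V) [DecidableRel G.Adj] (L : V → Finset (Fin 4)) (v : V)
    (i : Fin 4) (hdeg : G.degree v ≤ 2) (hLv : G.degree v + 2 ≤ (L v).card)
    (hnbl : ∀ u, G.Adj v u → G.degree u + 1 ≤ (L u).card) (hi : i ∈ L v) :
    (properColorings G L).card
      ≤ 12 * ((properColorings G L).filter (fun c => c v = i)).card := by
  classical
  set L' := Function.update L v ({(0 : Fin 4)} : Finset (Fin 4)) with hL'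
  set R := properColorings (Gd G v) L' with hR
  have hNdecomp := card_decomp G L v (0 : Fin 4)
  have hNi := card_filter_eq G L v (0 : Fin 4) i hi
  rw [← hL', ← hR] at hNdecomp hNi
  -- list bound at a neighbor u of v, for lemA applications
  have hAdeg : ∀ u, G.Adj v u → (Gd G v).degree u + 2 ≤ (L' u).card := by
    intro u hadj
    have huv : u ≠ v := fun h => G.loopless.irrefl v (h ▸ hadj)
    have h1 := Gd_degree_adj G hadj
    have h2 := hnbl u hadj
    rw [hL', Function.update_apply, if_neg huv]
    linarith
  -- bound on each summand by 4
  have hterm4 : ∀ c' : V → Fin 4, (L v \ (G.neighborFinset v).image c').card ≤ 4 := by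
    intro c'
    calc (L v \ (G.neighborFinset v).image c').card
        ≤ (univ : Finset (Fin 4)).card := Finset.card_le_univ _
      _ = 4 := by simp
  have hN4 : (properColorings G L).card ≤ 4 * R.card := by
    rw [hNdecomp]
    calc ∑ c' ∈ R, (L v \ (G.neighborFinset v).image c').card
        ≤ ∑ _c' ∈ R, 4 := Finset.sum_le_sum (fun c' _ => hterm4 c')
      _ = 4 * R.card := by rw [Finset.sum_const, smul_eq_mul, mul_comm]
  interval_cases hd : G.degree v
  -- degree 0
  · have hemp : G.neighborFinset v = ∅ := by
      rw [← Finset.card_eq_zero]; exact hd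
    have : R.filter (fun c' => ∀ x ∈ G.neighborFinset v, c' x ≠ i) = R := by
      apply Finset.filter_true_of_mem
      intro c' _ x hx
      rw [hemp] at hx
      exact absurd hx (Finset.notMem_empty x)
    rw [hNi, this]
    linarith
  -- degree 1
  · obtain ⟨u, hu⟩ := Finset.card_eq_one.1 hd
    have hadj : G.Adj v u := by
      rw [← SimpleGraph.mem_neighborFinset, hu]; exact Finset.mem_singleton_self u
    have hfil : R.filter (fun c' => ∀ x ∈ G.neighborFinset v, c' x ≠ i)
        = R.filter (fun c' => ¬ c' u = i) := by
      apply Finset.filter_congr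
      intro c' _
      rw [hu]
      simp
    have hAle := lemA (Gd G v) L' u i (hAdeg u hadj)
    rw [← hR] at hAle
    have hsplit := Finset.card_filter_add_card_filter_not
      (s := R) (p := fun c' => c' u = i)
    rw [hNi, hfil]
    -- names
    set A := (R.filter (fun c' => c' u = i)).card
    set B := (R.filter (fun c' => ¬ c' u = i)).card
    have : R.card ≤ 2 * B := by linarith
    linarith
  -- degree 2
  · obtain ⟨u, w, huw, hset⟩ := Finset.card_eq_two.1 hd
    have hadju : G.Adj v u := by
      rw [← SimpleGraph.mem_neighborFinset, hset]; simp
    have hadjw : G.Adj v w := by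
      rw [← SimpleGraph.mem_neighborFinset, hset]; simp
    have huv : u ≠ v := fun h => G.loopless.irrefl v (h ▸ hadju)
    have hwv : w ≠ v := fun h => G.loopless.irrefl v (h ▸ hadjw)
    -- N_i = X
    have hfil : R.filter (fun c' => ∀ x ∈ G.neighborFinset v, c' x ≠ i)
        = R.filter (fun c' => ¬ c' u = i ∧ ¬ c' w = i) := by
      apply Finset.filter_congr
      intro c' _
      rw [hset]
      simp
    -- per-color-class key inequality
    have hkey : ∀ j : Fin 4,
        2 * (R.filter (fun c => c u = j ∧ c w = i)).card
          ≤ (R.filter (fun c => c u = j)).card := by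
      intro j
      by_cases hjL : j ∈ L u
      · have hjL' : j ∈ L' u := by
          rw [hL', Function.update_apply, if_neg huv]; exact hjL
        have hwdeg : (Gd G v).degree w + 2
            ≤ ((Function.update L' u ({j} : Finset (Fin 4))) w).card := by
          rw [Function.update_apply, if_neg (fun h : w = u => huw h.symm)]
          exact hAdeg w hadjw
        have := lemA (Gd G v) (Function.update L' u ({j} : Finset (Fin 4))) w i hwdeg
        rw [hL'] at this
        rw [forced_eq G L v (0 : Fin 4) u huv j hjL] at this
        rw [← hL', ← hR, Finset.filter_filter] at this
        exact this
      · have : R.filter (fun c => c u = j ∧ c w = i) = ∅ := by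
          rw [Finset.filter_eq_empty_iff]
          intro c hc
          rw [hR, mem_R] at hc
          intro hcontra
          have hm := hc.1.2 u huv
          rw [hcontra.1] at hm
          exact hjL hm
        rw [this]
        simp
    -- fiberwise decompositions over the color of u
    have hS : R.card = ∑ j ∈ (univ : Finset (Fin 4)),
        (R.filter (fun c => c u = j)).card :=
      Finset.card_eq_sum_card_fiberwise (fun c _ => Finset.mem_univ (c u))
    have hX : (R.filter (fun c => ¬ c u = i ∧ ¬ c w = i)).card
        = ∑ j ∈ (univ : Finset (Fin 4)),
          (R.filter (fun c => (¬ c u = i ∧ ¬ c w = i) ∧ c u = j)).card := by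
      rw [Finset.card_eq_sum_card_fiberwise
        (f := fun c => c u) (t := (univ : Finset (Fin 4)))
        (fun c _ => Finset.mem_univ (c u))]
      apply Finset.sum_congr rfl
      intro j _
      rw [Finset.filter_filter]
    -- split off j = i
    have hSsplit : R.card = (R.filter (fun c => c u = i)).card
        + ∑ j ∈ (univ : Finset (Fin 4)).erase i, (R.filter (fun c => c u = j)).card := by
      rw [hS, ← Finset.add_sum_erase _ _ (Finset.mem_univ i)]
    have hXsplit : (R.filter (fun c => ¬ c u = i ∧ ¬ c w = i)).card
        = ∑ j ∈ (univ : Finset (Fin 4)).erase i,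
            (R.filter (fun c => c u = j ∧ ¬ c w = i)).card := by
      rw [hX, ← Finset.add_sum_erase _ _ (Finset.mem_univ i)]
      have h0 : (R.filter (fun c => (¬ c u = i ∧ ¬ c w = i) ∧ c u = i)).card = 0 := by
        rw [Finset.card_eq_zero, Finset.filter_eq_empty_iff]
        intro c _
        tauto
      rw [h0, zero_add]
      apply Finset.sum_congr rfl
      intro j hj
      rw [Finset.mem_erase] at hj
      congr 1
      apply Finset.filter_congr
      intro c _
      constructor
      · rintro ⟨⟨_, hw'⟩, hu'⟩; exact ⟨hu', hw'⟩
      · rintro ⟨hu', hw'⟩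
        exact ⟨⟨fun h => hj.1 (hu' ▸ h ▸ rfl), hw'⟩, hu'⟩
    -- per j in erase i : S_j ≤ 2 Y_j
    have hSj : ∀ j ∈ (univ : Finset (Fin 4)).erase i,
        (R.filter (fun c => c u = j)).card
          ≤ 2 * (R.filter (fun c => c u = j ∧ ¬ c w = i)).card := by
      intro j _
      have hsplitj := Finset.card_filter_add_card_filter_not
        (s := R.filter (fun c => c u = j)) (p := fun c => c w = i)
      rw [Finset.filter_filter, Finset.filter_filter] at hsplitj
      have := hkey j
      linarith
    have hsum_le : ∑ j ∈ (univ : Finset (Fin 4)).erase i, (R.filter (fun c => c u = j)).card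
        ≤ 2 * ∑ j ∈ (univ : Finset (Fin 4)).erase i,
            (R.filter (fun c => c u = j ∧ ¬ c w = i)).card := by
      rw [Finset.mul_sum]
      exact Finset.sum_le_sum hSj
    have h2Si := lemA (Gd G v) L' u i (hAdeg u hadju)
    rw [← hR] at h2Si
    -- S ≤ 4 X
    have hS4X : R.card ≤ 4 * (R.filter (fun c => ¬ c u = i ∧ ¬ c w = i)).card := by
      rw [hXsplit]
      linarith
    -- N ≤ 3 S
    have hterm3 : ∀ c' ∈ R, (L v \ (G.neighborFinset v).image c').card ≤ 3 := by
      intro c' _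
      have hsub : L v \ (G.neighborFinset v).image c' ⊆ (univ : Finset (Fin 4)).erase (c' u) := by
        intro x hx
        rw [Finset.mem_sdiff] at hx
        rw [Finset.mem_erase]
        refine ⟨fun h => hx.2 ?_, Finset.mem_univ x⟩
        rw [Finset.mem_image]
        exact ⟨u, by rw [hset]; simp, h.symm⟩
      calc (L v \ (G.neighborFinset v).image c').card
          ≤ ((univ : Finset (Fin 4)).erase (c' u)).card := Finset.card_le_card hsub
        _ = 3 := by rw [Finset.card_erase_of_mem (Finset.mem_univ _)]; simp
    have hN3 : (properColorings G L).card ≤ 3 * R.card := by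
      rw [hNdecomp]
      calc ∑ c' ∈ R, (L v \ (G.neighborFinset v).image c').card
          ≤ ∑ _c' ∈ R, 3 := Finset.sum_le_sum hterm3
        _ = 3 * R.card := by rw [Finset.sum_const, smul_eq_mul, mul_comm]
    rw [hNi, hfil]
    linarith

lemma margin_le_helper (G : SimpleGraph V) [DecidableRel G.Adj]
    (L : V → Finset (Fin 4)) (v : V) (i : Fin 4) (p q : ℝ) (hp : 0 ≤ p) (hq : 0 < q)
    (h : q * (((properColorings G L).filter (fun c => c v = i)).card : ℝ)
      ≤ p * ((properColorings G L).card : ℝ)) :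
    margin G L v i ≤ p / q := by
  rw [margin]
  rcases Nat.eq_zero_or_pos (properColorings G L).card with hb | hb
  · have ha : ((properColorings G L).filter (fun c => c v = i)).card = 0 := by
      have := Finset.card_le_card (Finset.filter_subset (fun c => c v = i) (properColorings G L))
      exact Nat.eq_zero_of_le_zero (hb ▸ this)
    rw [ha, hb]
    simp
    positivity
  · have hb' : (0 : ℝ) < ((properColorings G L).card : ℝ) := by positivity
    rw [div_le_div_iff₀ hb' hq]
    nlinarith

lemma main_aux2 (G : SimpleGraph V) [DecidableRel G.Adj] (L : V → Finset (Fin 4))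
    (v : V) (i : Fin 4) (u w : V)
    (h1 : ∀ x : V, G.degree x ≤ 3 ∧ G.degree x + 1 ≤ (L x).card)
    (hLv : 4 ≤ (L v).card) (hd : G.degree v = 2)
    (huw : u ≠ w) (hset : G.neighborFinset v = {u, w}) (hiu : i ∈ L u) :
    25 * ((properColorings G L).filter (fun c => c v = i)).card
      ≤ 12 * (properColorings G L).card := by
  classical
  have hadju : G.Adj v u := by
    rw [← SimpleGraph.mem_neighborFinset, hset]; simp
  have huv : u ≠ v := fun h => G.loopless.irrefl v (h ▸ hadju)
  have hi : i ∈ L v := by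
    have hcard : (L v).card = 4 := le_antisymm (by simpa using Finset.card_le_univ (L v)) hLv
    have : L v = univ := Finset.eq_univ_of_card _ (by simp [hcard])
    rw [this]; exact Finset.mem_univ i
  set L' := Function.update L v ({(0 : Fin 4)} : Finset (Fin 4)) with hL'
  set R := properColorings (Gd G v) L' with hR
  -- lemB application at u in the reduced instance
  have hB : R.card ≤ 12 * (R.filter (fun c => c u = i)).card := by
    rw [hR]
    apply lemB
    · have := Gd_degree_adj G hadju
      have := (h1 u).1
      omega
    · have := Gd_degree_adj G hadju
      have := (h1 u).2
      rw [hL', Function.update_apply, if_neg huv]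
      omega
    · intro x hax
      obtain ⟨hGax, -, hxv⟩ := hax
      have := Gd_degree_le G v x
      have := (h1 x).2
      rw [hL', Function.update_apply, if_neg hxv]
      omega
    · rw [hL', Function.update_apply, if_neg huv]; exact hiu
  have hNdecomp := card_decomp G L v (0 : Fin 4)
  have hNi := card_filter_eq G L v (0 : Fin 4) i hi
  rw [← hL', ← hR] at hNdecomp hNi
  -- N ≥ 2 S
  have hN2S : 2 * R.card ≤ (properColorings G L).card := by
    rw [hNdecomp]
    have hterm : ∀ c' : V → Fin 4, 2 ≤ (L v \ (G.neighborFinset v).image c').card := by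
      intro c'
      have h2 := Finset.le_card_sdiff ((G.neighborFinset v).image c') (L v)
      have h3 : ((G.neighborFinset v).image c').card ≤ 2 := by
        have := Finset.card_image_le (s := G.neighborFinset v) (f := c')
        have hcard2 : (G.neighborFinset v).card = 2 := hd
        clear hB hNdecomp hNi
        omega
      clear hB hNdecomp hNi
      omega
    calc 2 * R.card = ∑ _c' ∈ R, 2 := by rw [Finset.sum_const, smul_eq_mul, mul_comm]
      _ ≤ ∑ c' ∈ R, (L v \ (G.neighborFinset v).image c').card :=
          Finset.sum_le_sum (fun c' _ => hterm c')
  have hfil : R.filter (fun c' => ∀ x ∈ G.neighborFinset v, c' x ≠ i)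
      = R.filter (fun c' => ¬ c' u = i ∧ ¬ c' w = i) := by
    apply Finset.filter_congr
    intro c' _
    rw [hset]
    simp
  have hXA : (R.filter (fun c' => ¬ c' u = i ∧ ¬ c' w = i)).card
      ≤ (R.filter (fun c' => ¬ c' u = i)).card := by
    apply Finset.card_le_card
    intro c hc
    rw [Finset.mem_filter] at hc ⊢
    exact ⟨hc.1, hc.2.1⟩
  have hsplit := Finset.card_filter_add_card_filter_not
    (s := R) (p := fun c' => c' u = i)
  rw [hNi, hfil]
  linarith

lemma main_aux1 (G : SimpleGraph V) [DecidableRel G.Adj] (L : V → Finset (Fin 4))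
    (v : V) (i : Fin 4) (u : V)
    (h1 : ∀ x : V, G.degree x ≤ 3 ∧ G.degree x + 1 ≤ (L x).card)
    (hLv : 3 ≤ (L v).card) (hd : G.degree v = 1)
    (hset : G.neighborFinset v = {u}) (hiu : i ∈ L u) (hi : i ∈ L v) :
    13 * ((properColorings G L).filter (fun c => c v = i)).card
      ≤ 6 * (properColorings G L).card := by
  classical
  have hadju : G.Adj v u := by
    rw [← SimpleGraph.mem_neighborFinset, hset]; simp
  have huv : u ≠ v := fun h => G.loopless.irrefl v (h ▸ hadju)
  set L' := Function.update L v ({(0 : Fin 4)} : Finset (Fin 4)) with hL'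
  set R := properColorings (Gd G v) L' with hR
  have hB : R.card ≤ 12 * (R.filter (fun c => c u = i)).card := by
    rw [hR]
    apply lemB
    · have := Gd_degree_adj G hadju
      have := (h1 u).1
      omega
    · have := Gd_degree_adj G hadju
      have := (h1 u).2
      rw [hL', Function.update_apply, if_neg huv]
      omega
    · intro x hax
      obtain ⟨hGax, -, hxv⟩ := hax
      have := Gd_degree_le G v x
      have := (h1 x).2
      rw [hL', Function.update_apply, if_neg hxv]
      omega
    · rw [hL', Function.update_apply, if_neg huv]; exact hiu
  have hNdecomp := card_decomp G L v (0 : Fin 4)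
  have hNi := card_filter_eq G L v (0 : Fin 4) i hi
  rw [← hL', ← hR] at hNdecomp hNi
  have hN2S : 2 * R.card ≤ (properColorings G L).card := by
    rw [hNdecomp]
    have hterm : ∀ c' : V → Fin 4, 2 ≤ (L v \ (G.neighborFinset v).image c').card := by
      intro c'
      have h2 := Finset.le_card_sdiff ((G.neighborFinset v).image c') (L v)
      have h3 : ((G.neighborFinset v).image c').card ≤ 1 := by
        have := Finset.card_image_le (s := G.neighborFinset v) (f := c')
        have hcard1 : (G.neighborFinset v).card = 1 := hd
        clear hB hNdecomp hNi
        omega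
      clear hB hNdecomp hNi
      omega
    calc 2 * R.card = ∑ _c' ∈ R, 2 := by rw [Finset.sum_const, smul_eq_mul, mul_comm]
      _ ≤ ∑ c' ∈ R, (L v \ (G.neighborFinset v).image c').card :=
          Finset.sum_le_sum (fun c' _ => hterm c')
  have hfil : R.filter (fun c' => ∀ x ∈ G.neighborFinset v, c' x ≠ i)
      = R.filter (fun c' => ¬ c' u = i) := by
    apply Finset.filter_congr
    intro c' _
    rw [hset]
    simp
  have hsplit := Finset.card_filter_add_card_filter_not
    (s := R) (p := fun c' => c' u = i)
  rw [hNi, hfil]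
  linarith

/-- Upper bounds on marginals at a reachable triple when the color `i` appears in the
list of some neighbor of `v`: `12/25` when `deg v = 2` and `6/13` when `deg v = 1`. -/
theorem marginal_upper_bounds_neighbor (G : SimpleGraph V) [DecidableRel G.Adj]
    (L : V → Finset (Fin 4)) (v : V) (hreach : Reachable4 G L v)
    (i : Fin 4) (hnb : ∃ u : V, G.Adj v u ∧ i ∈ L u) :
    (G.degree v = 2 → margin G L v i ≤ 12 / 25) ∧
      (G.degree v = 1 → margin G L v i ≤ 6 / 13) := by
  classical
  obtain ⟨h1, hdv, hLv⟩ := hreach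
  obtain ⟨u0, hadj0, hiu0⟩ := hnb
  constructor
  · intro hd2
    have key : 25 * ((properColorings G L).filter (fun c => c v = i)).card
        ≤ 12 * (properColorings G L).card := by
      have hcard2 : (G.neighborFinset v).card = 2 := hd2
      obtain ⟨u, w, huw, hset⟩ := Finset.card_eq_two.1 hcard2
      have hu0 : u0 ∈ ({u, w} : Finset V) := by
        rw [← hset, SimpleGraph.mem_neighborFinset]; exact hadj0
      rw [Finset.mem_insert, Finset.mem_singleton] at hu0
      rcases hu0 with rfl | rfl
      · exact main_aux2 G L v i u0 w h1 (by omega) hd2 huw hset hiu0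
      · exact main_aux2 G L v i u0 u h1 (by omega) hd2 (Ne.symm huw)
          (by rw [hset, Finset.pair_comm]) hiu0
    have := margin_le_helper G L v i 12 25 (by norm_num) (by norm_num)
      (by exact_mod_cast key)
    linarith
  · intro hd1
    by_cases hiLv : i ∈ L v
    · have key : 13 * ((properColorings G L).filter (fun c => c v = i)).card
          ≤ 6 * (properColorings G L).card := by
        have hcard1 : (G.neighborFinset v).card = 1 := hd1
        obtain ⟨u, hset⟩ := Finset.card_eq_one.1 hcard1
        have hu0 : u0 ∈ ({u} : Finset V) := by
          rw [← hset, SimpleGraph.mem_neighborFinset]; exact hadj0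
        rw [Finset.mem_singleton] at hu0
        subst hu0
        exact main_aux1 G L v i u0 h1 (by omega) hd1 hset hiu0 hiLv
      have := margin_le_helper G L v i 6 13 (by norm_num) (by norm_num)
        (by exact_mod_cast key)
      linarith
    · have hempty : (properColorings G L).filter (fun c => c v = i) = ∅ := by
        rw [Finset.filter_eq_empty_iff]
        intro c hc
        rw [mem_pc] at hc
        exact fun h => hiLv (h ▸ hc.1 v)
      rw [margin, hempty]
      norm_num
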